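/- FedProx convergence with variable inexactness levels. Assume each F k is differentiable with L-Lipschitz gradient and satisfies the curvature lower bound with constant L₋, where 0 ≤ L₋ < μ and μ̄ := μ − L₋ > 0. Let wᵗ ∈ E, let the local functions be B-dissimilar at wᵗ (B ≥ 0), let γ : Fin N → ℝ with 0 ≤ γ k ≤ 1 for all k, and for each device k let w k⁺ be a γ k-inexact solution of min h k. Let Γ ∈ [0,1] satisfy γ k ≤ Γ for all k, let K ≥ 1, and set ρ := 1/μ − Γ·B/μ − √2·B(1+Γ)/(μ̄·√K) − L·B(1+Γ)/(μ̄·μ) − L·(1+Γ)²·B²/(2μ̄²) − L·B²·(1+Γ)²·(2√(2K)+2)/(μ̄²·K). Then ∑_{s : Fin K → Fin N} (∏ j, p (s j)) · f((1/K)·∑ j, w (s j)⁺) ≤ f(wᵗ) − ρ·‖∇f(wᵗ)‖². -/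

import Mathlib

open scoped BigOperators RealInnerProductSpace

section AuxAnalysis


variable {E : Type*} [NormedAddCommGroup E] [InnerProductSpace ℝ E] [CompleteSpace E]

lemma line_hasDerivAt {g : E → ℝ} (hg : Differentiable ℝ g) (x v : E) (t : ℝ) :
    HasDerivAt (fun t : ℝ => g (x + t • v)) ⟪gradient g (x + t • v), v⟫ t := by
  have hc : HasDerivAt (fun t : ℝ => x + t • v) v t := by
    simpa using ((hasDerivAt_id t).smul_const v).const_add x
  have hgd := (hg (x + t • v)).hasGradientAt
  rw [hasGradientAt_iff_hasFDerivAt] at hgd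
  have := hgd.comp_hasDerivAt t hc
  simpa [Function.comp_def] using this

lemma descent_lemma {g : E → ℝ} {L : ℝ} (hL : 0 ≤ L) (hg : Differentiable ℝ g)
    (hlip : ∀ a b : E, ‖gradient g a - gradient g b‖ ≤ L * ‖a - b‖)
    (hcont : Continuous (gradient g)) (x y : E) :
    g y ≤ g x + ⟪gradient g x, y - x⟫ + L / 2 * ‖y - x‖ ^ 2 := by
  set v := y - x with hv
  have hder : ∀ t : ℝ, HasDerivAt (fun t : ℝ => g (x + t • v))
      ⟪gradient g (x + t • v), v⟫ t := fun t => line_hasDerivAt hg x v t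
  have hcont' : Continuous fun t : ℝ => ⟪gradient g (x + t • v), v⟫ := by
    apply Continuous.inner
    · exact hcont.comp (by continuity)
    · exact continuous_const
  have hFTC : (∫ t in (0:ℝ)..1, ⟪gradient g (x + t • v), v⟫)
      = g (x + (1:ℝ) • v) - g (x + (0:ℝ) • v) :=
    intervalIntegral.integral_eq_sub_of_hasDerivAt (fun t _ => hder t)
      (hcont'.intervalIntegrable 0 1)
  have hcont2 : Continuous fun t : ℝ => ⟪gradient g x, v⟫ + L * t * ‖v‖ ^ 2 := by
    continuity
  have hmono : (∫ t in (0:ℝ)..1, ⟪gradient g (x + t • v), v⟫)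
      ≤ ∫ t in (0:ℝ)..1, (⟪gradient g x, v⟫ + L * t * ‖v‖ ^ 2) := by
    apply intervalIntegral.integral_mono_on (by norm_num) (hcont'.intervalIntegrable 0 1)
      (hcont2.intervalIntegrable 0 1)
    intro t ht
    have h2 : ⟪gradient g (x + t • v) - gradient g x, v⟫ ≤ L * t * ‖v‖ ^ 2 := by
      calc ⟪gradient g (x + t • v) - gradient g x, v⟫
          ≤ ‖gradient g (x + t • v) - gradient g x‖ * ‖v‖ := real_inner_le_norm _ _
        _ ≤ (L * ‖x + t • v - x‖) * ‖v‖ :=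
            mul_le_mul_of_nonneg_right (hlip _ _) (norm_nonneg _)
        _ = L * t * ‖v‖ ^ 2 := by
            rw [add_sub_cancel_left, norm_smul, Real.norm_eq_abs, abs_of_nonneg ht.1]
            ring
    rw [inner_sub_left] at h2
    linarith
  have hint : (∫ t in (0:ℝ)..1, (⟪gradient g x, v⟫ + L * t * ‖v‖ ^ 2))
      = ⟪gradient g x, v⟫ + L / 2 * ‖v‖ ^ 2 := by
    rw [intervalIntegral.integral_add (intervalIntegrable_const)
      (by apply Continuous.intervalIntegrable; continuity)]
    have : (∫ t in (0:ℝ)..1, L * t * ‖v‖ ^ 2) = L / 2 * ‖v‖ ^ 2 := by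
      have h : (fun t : ℝ => L * t * ‖v‖ ^ 2) = fun t : ℝ => t * (L * ‖v‖ ^ 2) := by
        funext t; ring
      rw [h, intervalIntegral.integral_mul_const, integral_id]
      ring
    rw [this]
    simp
  have h0 : x + (0:ℝ) • v = x := by simp
  have h1 : x + (1:ℝ) • v = y := by simp [hv]
  rw [h0, h1] at hFTC
  linarith [hmono.trans_eq hint, hFTC.symm.le, hFTC.ge]



lemma line_hasDerivAt' {g : E → ℝ} (hg : Differentiable ℝ g) (x v : E) (t : ℝ) :
    HasDerivAt (fun t : ℝ => g (x + t • v)) ⟪gradient g (x + t • v), v⟫ t := by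
  have hc : HasDerivAt (fun t : ℝ => x + t • v) v t := by
    simpa using ((hasDerivAt_id t).smul_const v).const_add x
  have hgd := (hg (x + t • v)).hasGradientAt
  rw [hasGradientAt_iff_hasFDerivAt] at hgd
  have := hgd.comp_hasDerivAt t hc
  simpa [Function.comp_def] using this

lemma grad_lower {g : E → ℝ} (hg : Differentiable ℝ g) {c : ℝ}
    (hconv : ConvexOn ℝ Set.univ fun w => g w + c / 2 * ‖w‖ ^ 2) (a b : E) :
    -c * ‖a - b‖ ^ 2 ≤ ⟪gradient g a - gradient g b, a - b⟫ := by
  set v := a - b with hvdef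
  have hA : ∀ t : ℝ, (AffineMap.lineMap b a : ℝ →ᵃ[ℝ] E) t = b + t • v := by
    intro t
    rw [AffineMap.lineMap_apply]
    simp [hvdef, add_comm]
  have hφconv : ConvexOn ℝ Set.univ fun t : ℝ => g (b + t • v) + c / 2 * ‖b + t • v‖ ^ 2 := by
    have h := hconv.comp_affineMap (AffineMap.lineMap b a : ℝ →ᵃ[ℝ] E)
    have heq : ((fun w => g w + c / 2 * ‖w‖ ^ 2) ∘ (AffineMap.lineMap b a : ℝ →ᵃ[ℝ] E))
        = fun t : ℝ => g (b + t • v) + c / 2 * ‖b + t • v‖ ^ 2 := by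
      funext t; simp [Function.comp, hA t]
    rw [heq] at h
    simpa using h
  have hder : ∀ t : ℝ, HasDerivAt (fun t : ℝ => g (b + t • v) + c / 2 * ‖b + t • v‖ ^ 2)
      (⟪gradient g (b + t • v), v⟫ + c * ⟪b + t • v, v⟫) t := by
    intro t
    have h1 := line_hasDerivAt' hg b v t
    have hc' : HasDerivAt (fun t : ℝ => b + t • v) v t := by
      simpa using ((hasDerivAt_id t).smul_const v).const_add b
    have h2 : HasDerivAt (fun t : ℝ => ⟪(b + t • v : E), (b + t • v : E)⟫)
        (⟪b + t • v, v⟫ + ⟪v, b + t • v⟫) t := hc'.inner ℝ hc'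
    have h3 : HasDerivAt (fun t : ℝ => c / 2 * ‖b + t • v‖ ^ 2) (c * ⟪b + t • v, v⟫) t := by
      have h4 := h2.const_mul (c / 2)
      have heq : (fun t : ℝ => c / 2 * ⟪(b + t • v : E), (b + t • v : E)⟫)
          = fun t : ℝ => c / 2 * ‖b + t • v‖ ^ 2 := by
        funext t; rw [real_inner_self_eq_norm_sq]
      rw [heq] at h4
      refine h4.congr_deriv ?_
      rw [real_inner_comm]; ring
    exact h1.add h3
  have hmono := hφconv.monotoneOn_deriv (fun t _ => (hder t).differentiableAt)
  have h01 := hmono (Set.mem_univ (0:ℝ)) (Set.mem_univ (1:ℝ)) zero_le_one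
  rw [(hder 0).deriv, (hder 1).deriv] at h01
  have hb0 : b + (0:ℝ) • v = b := by simp
  have hb1 : b + (1:ℝ) • v = a := by simp [hvdef]
  rw [hb0, hb1] at h01
  have h4 : ⟪a, v⟫ - ⟪b, v⟫ = ‖v‖ ^ 2 := by
    rw [← inner_sub_left, ← hvdef, real_inner_self_eq_norm_sq]
  rw [inner_sub_left]
  have h5 : c * (⟪a, v⟫ - ⟪b, v⟫) = c * ‖v‖ ^ 2 := by rw [h4]
  ring_nf at h01 h5 ⊢
  linarith [h01, h5]
end AuxAnalysis

section AuxCombinatorics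


lemma split_sum {N : ℕ} (p : Fin N → ℝ) {ι : Type*} [Fintype ι] [DecidableEq ι] (j₀ : ι)
    {M : Type*} [AddCommMonoid M] [Module ℝ M]
    (G : Fin N → ({j : ι // j ≠ j₀} → Fin N) → M) :
    ∑ s : ι → Fin N, (∏ j, p (s j)) • G (s j₀) (fun x => s x.1)
      = ∑ a, ∑ t : {j : ι // j ≠ j₀} → Fin N, (p a * ∏ x, p (t x)) • G a t := by
  rw [← Equiv.sum_comp (Equiv.funSplitAt j₀ (Fin N)).symm
      (fun s => (∏ j, p (s j)) • G (s j₀) fun x => s x.1)]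
  rw [Fintype.sum_prod_type]
  refine Finset.sum_congr rfl fun a _ => Finset.sum_congr rfl fun t _ => ?_
  have h1 : (Equiv.funSplitAt j₀ (Fin N)).symm (a, t) j₀ = a := by simp
  have h2 : ∀ x : {j : ι // j ≠ j₀}, (Equiv.funSplitAt j₀ (Fin N)).symm (a, t) x.1 = t x := by
    intro x
    simp [Equiv.funSplitAt, Equiv.piSplitAt, x.2]
  have h3 : (∏ j, p ((Equiv.funSplitAt j₀ (Fin N)).symm (a, t) j)) = p a * ∏ x, p (t x) := by
    rw [Finset.prod_eq_mul_prod_sdiff_singleton_of_mem (Finset.mem_univ j₀), h1]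
    congr 1
    rw [Finset.prod_subtype (Finset.univ \ {j₀}) (p := fun j => j ≠ j₀) (by simp)]
    exact Finset.prod_congr rfl fun x _ => by rw [h2 x]
  rw [h1, h3]
  have : (fun x : {j : ι // j ≠ j₀} => (Equiv.funSplitAt j₀ (Fin N)).symm (a, t) x.1) = t := by
    funext x; rw [h2 x]
  rw [this]

lemma prob_sum_one {N : ℕ} (p : Fin N → ℝ) (hp1 : ∑ k, p k = 1)
    {ι : Type*} [Fintype ι] [DecidableEq ι] :
    ∑ s : ι → Fin N, (∏ j, p (s j)) = 1 := by
  have h := Finset.prod_univ_sum (fun _ : ι => (Finset.univ : Finset (Fin N)))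
    (fun _ k => p k)
  simp only [hp1, Finset.prod_const_one, Fintype.piFinset_univ] at h
  exact h.symm

lemma expect_coord {N : ℕ} (p : Fin N → ℝ) (hp1 : ∑ k, p k = 1)
    {ι : Type*} [Fintype ι] [DecidableEq ι] (j₀ : ι)
    {M : Type*} [AddCommMonoid M] [Module ℝ M] (G : Fin N → M) :
    ∑ s : ι → Fin N, (∏ j, p (s j)) • G (s j₀) = ∑ k, p k • G k := by
  have h := split_sum p j₀ (fun a (_ : {j : ι // j ≠ j₀} → Fin N) => G a)
  rw [h]
  refine Finset.sum_congr rfl fun a _ => ?_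
  rw [← Finset.sum_smul, ← Finset.mul_sum, prob_sum_one p hp1, mul_one]


lemma expect_var {E : Type*} [NormedAddCommGroup E] [InnerProductSpace ℝ E]
    {N K : ℕ} (p : Fin N → ℝ) (hp1 : ∑ k, p k = 1)
    (Y : Fin N → E) (hY : ∑ k, p k • Y k = 0) :
    ∑ s : Fin K → Fin N, (∏ j, p (s j)) * ‖∑ j, Y (s j)‖ ^ 2
      = K * ∑ k, p k * ‖Y k‖ ^ 2 := by
  have hinner : ∀ s : Fin K → Fin N, ‖∑ j, Y (s j)‖ ^ 2
      = ∑ j₁, ∑ j₂, ⟪Y (s j₁), Y (s j₂)⟫ := by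
    intro s
    rw [← real_inner_self_eq_norm_sq, sum_inner]
    exact Finset.sum_congr rfl fun j₁ _ => inner_sum _ _ _
  have h1 : ∑ s : Fin K → Fin N, (∏ j, p (s j)) * ‖∑ j, Y (s j)‖ ^ 2
      = ∑ j₁ : Fin K, ∑ j₂ : Fin K,
          ∑ s : Fin K → Fin N, (∏ j, p (s j)) * ⟪Y (s j₁), Y (s j₂)⟫ := by
    simp_rw [hinner, Finset.mul_sum]
    rw [Finset.sum_comm]
    exact Finset.sum_congr rfl fun j₁ _ => Finset.sum_comm
  have hdiag : ∀ j : Fin K,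
      (∑ s : Fin K → Fin N, (∏ j', p (s j')) * ⟪Y (s j), Y (s j)⟫)
        = ∑ k, p k * ‖Y k‖ ^ 2 := by
    intro j
    have h := expect_coord p hp1 j (fun k => ⟪Y k, Y k⟫)
    simp only [smul_eq_mul] at h
    rw [h]
    exact Finset.sum_congr rfl fun k _ => by rw [real_inner_self_eq_norm_sq]
  have hoff : ∀ j₁ j₂ : Fin K, j₂ ≠ j₁ →
      (∑ s : Fin K → Fin N, (∏ j, p (s j)) * ⟪Y (s j₁), Y (s j₂)⟫) = 0 := by
    intro j₁ j₂ hne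
    have h := split_sum p j₁
      (fun a (t : {j : Fin K // j ≠ j₁} → Fin N) => ⟪Y a, Y (t ⟨j₂, hne⟩)⟫)
    simp only [smul_eq_mul] at h
    rw [h]
    apply Finset.sum_eq_zero
    intro a _
    have hc := expect_coord p hp1 (⟨j₂, hne⟩ : {j : Fin K // j ≠ j₁}) Y
    have heq : ∑ t : {j : Fin K // j ≠ j₁} → Fin N,
          (p a * ∏ x, p (t x)) * ⟪Y a, Y (t ⟨j₂, hne⟩)⟫
        = p a * ⟪Y a, ∑ t : {j : Fin K // j ≠ j₁} → Fin N,
            (∏ x, p (t x)) • Y (t ⟨j₂, hne⟩)⟫ := by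
      rw [inner_sum, Finset.mul_sum]
      refine Finset.sum_congr rfl fun t _ => ?_
      rw [real_inner_smul_right]; ring
    rw [heq, hc, hY, inner_zero_right, mul_zero]
  have h2 : ∀ j₁ : Fin K,
      (∑ j₂ : Fin K, ∑ s : Fin K → Fin N, (∏ j, p (s j)) * ⟪Y (s j₁), Y (s j₂)⟫)
        = ∑ k, p k * ‖Y k‖ ^ 2 := by
    intro j₁
    rw [Finset.sum_eq_single j₁]
    · exact hdiag j₁
    · intro j₂ _ hne
      exact hoff j₁ j₂ hne
    · intro h; exact absurd (Finset.mem_univ _) h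
  rw [h1]
  calc ∑ j₁ : Fin K, ∑ j₂ : Fin K,
        ∑ s : Fin K → Fin N, (∏ j, p (s j)) * ⟪Y (s j₁), Y (s j₂)⟫
      = ∑ _j₁ : Fin K, ∑ k, p k * ‖Y k‖ ^ 2 :=
        Finset.sum_congr rfl fun j₁ _ => h2 j₁
    _ = K * ∑ k, p k * ‖Y k‖ ^ 2 := by
        rw [Finset.sum_const, Finset.card_univ, Fintype.card_fin, nsmul_eq_mul]
end AuxCombinatorics

lemma weighted_cs {N : ℕ} (p : Fin N → ℝ) (hp : ∀ k, 0 ≤ p k) (hp1 : ∑ k, p k = 1)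
    (a : Fin N → ℝ) : (∑ k, p k * a k) ^ 2 ≤ ∑ k, p k * a k ^ 2 := by
  have hcs := Finset.sum_mul_sq_le_sq_mul_sq Finset.univ
    (fun k => Real.sqrt (p k)) (fun k => Real.sqrt (p k) * a k)
  have e1 : ∀ k : Fin N, Real.sqrt (p k) * (Real.sqrt (p k) * a k) = p k * a k := fun k => by
    rw [← mul_assoc, Real.mul_self_sqrt (hp k)]
  have e2 : ∀ k : Fin N, Real.sqrt (p k) ^ 2 = p k := fun k => Real.sq_sqrt (hp k)
  have e3 : ∀ k : Fin N, (Real.sqrt (p k) * a k) ^ 2 = p k * a k ^ 2 := fun k => by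
    rw [mul_pow, Real.sq_sqrt (hp k)]
  simp_rw [e1, e2, e3] at hcs
  rwa [hp1, one_mul] at hcs

set_option maxHeartbeats 2000000 in
/-- FedProx convergence with variable inexactness levels. -/
theorem fedprox_variable_gamma_descent
    {E : Type*} [NormedAddCommGroup E] [InnerProductSpace ℝ E] [CompleteSpace E]
    {N : ℕ} (hN : 1 ≤ N) (p : Fin N → ℝ)
    (hp : ∀ k, 0 ≤ p k) (hp1 : ∑ k, p k = 1)
    (F : Fin N → E → ℝ) (f : E → ℝ) (hf : ∀ w, f w = ∑ k, p k * F k w)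
    {L : ℝ} (hL : 0 ≤ L)
    (hFdiff : ∀ k, Differentiable ℝ (F k))
    (hFlip : ∀ k, LipschitzWith (Real.toNNReal L) (gradient (F k)))
    {Lm μ : ℝ} (hLm : 0 ≤ Lm) (hμ : Lm < μ)
    (hcurv : ∀ k, ConvexOn ℝ Set.univ (fun w => F k w + (Lm / 2) * ‖w‖ ^ 2))
    (wt : E) {B : ℝ} (hB : 0 ≤ B)
    (hdissim : ∑ k, p k * ‖gradient (F k) wt‖ ^ 2 ≤ B ^ 2 * ‖gradient f wt‖ ^ 2)
    (γ : Fin N → ℝ) (hγ0 : ∀ k, 0 ≤ γ k) (hγ1 : ∀ k, γ k ≤ 1)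
    (wplus : Fin N → E)
    (hinexact : ∀ k,
      ‖gradient (F k) (wplus k) + μ • (wplus k - wt)‖ ≤ γ k * ‖gradient (F k) wt‖)
    {Γ : ℝ} (hΓ0 : 0 ≤ Γ) (hΓ1 : Γ ≤ 1) (hγΓ : ∀ k, γ k ≤ Γ)
    {K : ℕ} (hK : 1 ≤ K)
    (ρ : ℝ)
    (hρ : ρ = 1 / μ - Γ * B / μ
        - Real.sqrt 2 * B * (1 + Γ) / ((μ - Lm) * Real.sqrt K)
        - L * B * (1 + Γ) / ((μ - Lm) * μ)
        - L * (1 + Γ) ^ 2 * B ^ 2 / (2 * (μ - Lm) ^ 2)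
        - L * B ^ 2 * (1 + Γ) ^ 2 * (2 * Real.sqrt (2 * K) + 2) / ((μ - Lm) ^ 2 * K)) :
    ∑ s : Fin K → Fin N, (∏ j, p (s j)) * f ((1 / (K : ℝ)) • ∑ j, wplus (s j))
      ≤ f wt - ρ * ‖gradient f wt‖ ^ 2 := by
  have hμpos : 0 < μ := lt_of_le_of_lt hLm hμ
  have hmubar : 0 < μ - Lm := sub_pos.mpr hμ
  have hKpos : (0:ℝ) < (K:ℝ) := by exact_mod_cast Nat.pos_of_ne_zero (by omega)
  have hGnn : (0:ℝ) ≤ ‖gradient f wt‖ := norm_nonneg _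
  -- Lipschitz gradients in norm form
  have hglip : ∀ k (a b : E), ‖gradient (F k) a - gradient (F k) b‖ ≤ L * ‖a - b‖ := by
    intro k a b
    have h := (hFlip k).dist_le_mul a b
    rwa [dist_eq_norm, dist_eq_norm, Real.coe_toNNReal L hL] at h
  -- gradient of f
  have hgradf : ∀ x : E, HasGradientAt f (∑ k, p k • gradient (F k) x) x := by
    intro x
    rw [hasGradientAt_iff_hasFDerivAt]
    have hsum : HasFDerivAt (fun w => ∑ k, p k * F k w)
        (∑ k, p k • (InnerProductSpace.toDual ℝ E (gradient (F k) x) : E →L[ℝ] ℝ)) x := by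
      apply HasFDerivAt.fun_sum
      intro k _
      have hk := (hFdiff k x).hasGradientAt
      rw [hasGradientAt_iff_hasFDerivAt] at hk
      exact hk.const_mul (p k)
    have heq : (fun w => ∑ k, p k * F k w) = f := by funext w; rw [hf w]
    rw [heq] at hsum
    have hCLM : (InnerProductSpace.toDual ℝ E (∑ k, p k • gradient (F k) x) : E →L[ℝ] ℝ)
        = ∑ k, p k • (InnerProductSpace.toDual ℝ E (gradient (F k) x) : E →L[ℝ] ℝ) := by
      ext y
      simp [InnerProductSpace.toDual_apply_apply, sum_inner, real_inner_smul_left]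
    rw [hCLM]
    exact hsum
  have hgradf_eq : ∀ x, gradient f x = ∑ k, p k • gradient (F k) x :=
    fun x => (hgradf x).gradient
  have hfdiff : Differentiable ℝ f := fun x => (hgradf x).differentiableAt
  have hflip : ∀ a b : E, ‖gradient f a - gradient f b‖ ≤ L * ‖a - b‖ := by
    intro a b
    rw [hgradf_eq a, hgradf_eq b, ← Finset.sum_sub_distrib]
    calc ‖∑ k, (p k • gradient (F k) a - p k • gradient (F k) b)‖
        ≤ ∑ k, ‖p k • gradient (F k) a - p k • gradient (F k) b‖ := norm_sum_le _ _
      _ ≤ ∑ k, p k * (L * ‖a - b‖) := by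
          apply Finset.sum_le_sum; intro k _
          rw [← smul_sub, norm_smul, Real.norm_eq_abs, abs_of_nonneg (hp k)]
          exact mul_le_mul_of_nonneg_left (hglip k a b) (hp k)
      _ = L * ‖a - b‖ := by rw [← Finset.sum_mul, hp1, one_mul]
  have hfcont : Continuous (gradient f) := by
    have h : LipschitzWith (Real.toNNReal L) (gradient f) := by
      apply LipschitzWith.of_dist_le_mul
      intro a b
      rw [dist_eq_norm, dist_eq_norm, Real.coe_toNNReal L hL]
      exact hflip a b
    exact h.continuous
  -- Step 1: per-device distance bound
  have hd : ∀ k, (μ - Lm) * ‖wplus k - wt‖ ≤ (1 + Γ) * ‖gradient (F k) wt‖ := by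
    intro k
    by_cases hzero : ‖wplus k - wt‖ = 0
    · rw [hzero, mul_zero]
      have := norm_nonneg (gradient (F k) wt)
      nlinarith [hΓ0]
    have hdpos : 0 < ‖wplus k - wt‖ := lt_of_le_of_ne (norm_nonneg _) (Ne.symm hzero)
    have hmono := grad_lower (hFdiff k) (hcurv k) (wplus k) wt
    have hexpand : gradient (F k) (wplus k) + μ • (wplus k - wt) - gradient (F k) wt
        = (gradient (F k) (wplus k) - gradient (F k) wt) + μ • (wplus k - wt) := by
      abel
    have hinner1 : (μ - Lm) * ‖wplus k - wt‖ ^ 2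
        ≤ ⟪gradient (F k) (wplus k) + μ • (wplus k - wt) - gradient (F k) wt,
            wplus k - wt⟫ := by
      rw [hexpand, inner_add_left, real_inner_smul_left, real_inner_self_eq_norm_sq]
      nlinarith [hmono]
    have hCS : ⟪gradient (F k) (wplus k) + μ • (wplus k - wt) - gradient (F k) wt,
          wplus k - wt⟫ ≤ (1 + Γ) * ‖gradient (F k) wt‖ * ‖wplus k - wt‖ := by
      have h4 : ‖gradient (F k) (wplus k) + μ • (wplus k - wt)‖ + ‖gradient (F k) wt‖
          ≤ (1 + Γ) * ‖gradient (F k) wt‖ := by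
        have h1 := hinexact k
        have h2 := hγΓ k
        have h3 := norm_nonneg (gradient (F k) wt)
        nlinarith
      calc ⟪gradient (F k) (wplus k) + μ • (wplus k - wt) - gradient (F k) wt,
              wplus k - wt⟫
          ≤ ‖gradient (F k) (wplus k) + μ • (wplus k - wt) - gradient (F k) wt‖
            * ‖wplus k - wt‖ := real_inner_le_norm _ _
        _ ≤ (‖gradient (F k) (wplus k) + μ • (wplus k - wt)‖ + ‖gradient (F k) wt‖)
            * ‖wplus k - wt‖ :=
            mul_le_mul_of_nonneg_right (norm_sub_le _ _) (norm_nonneg _)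
        _ ≤ (1 + Γ) * ‖gradient (F k) wt‖ * ‖wplus k - wt‖ :=
            mul_le_mul_of_nonneg_right h4 hdpos.le
    nlinarith [le_trans hinner1 hCS, hdpos]
  have hdk : ∀ k, ‖wplus k - wt‖ ≤ (1 + Γ) / (μ - Lm) * ‖gradient (F k) wt‖ := by
    intro k
    rw [div_mul_eq_mul_div, le_div_iff₀ hmubar]
    nlinarith [hd k]
  -- weighted sums of gradient norms
  have hS1nn : (0:ℝ) ≤ ∑ k, p k * ‖gradient (F k) wt‖ :=
    Finset.sum_nonneg fun k _ => mul_nonneg (hp k) (norm_nonneg _)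
  have hS1sq := weighted_cs p hp hp1 (fun k => ‖gradient (F k) wt‖)
  have hS1 : ∑ k, p k * ‖gradient (F k) wt‖ ≤ B * ‖gradient f wt‖ := by
    nlinarith [hS1sq, hdissim, hS1nn, mul_nonneg hB hGnn]
  -- the averaged iterate
  have hdbar : (∑ k, p k • wplus k) - wt = ∑ k, p k • (wplus k - wt) := by
    simp_rw [smul_sub]
    rw [Finset.sum_sub_distrib, ← Finset.sum_smul, hp1, one_smul]
  have hdbarnorm : ‖(∑ k, p k • wplus k) - wt‖
      ≤ (1 + Γ) / (μ - Lm) * (B * ‖gradient f wt‖) := by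
    rw [hdbar]
    calc ‖∑ k, p k • (wplus k - wt)‖ ≤ ∑ k, ‖p k • (wplus k - wt)‖ := norm_sum_le _ _
      _ = ∑ k, p k * ‖wplus k - wt‖ := by
          refine Finset.sum_congr rfl fun k _ => ?_
          rw [norm_smul, Real.norm_eq_abs, abs_of_nonneg (hp k)]
      _ ≤ ∑ k, p k * ((1 + Γ) / (μ - Lm) * ‖gradient (F k) wt‖) :=
          Finset.sum_le_sum fun k _ => mul_le_mul_of_nonneg_left (hdk k) (hp k)
      _ = (1 + Γ) / (μ - Lm) * ∑ k, p k * ‖gradient (F k) wt‖ := by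
          rw [Finset.mul_sum]; exact Finset.sum_congr rfl fun k _ => by ring
      _ ≤ (1 + Γ) / (μ - Lm) * (B * ‖gradient f wt‖) :=
          mul_le_mul_of_nonneg_left hS1 (by positivity)
  have hcoef : (0:ℝ) ≤ Γ + L * (1 + Γ) / (μ - Lm) :=
    add_nonneg hΓ0 (div_nonneg (by nlinarith) hmubar.le)
  -- key representation bound
  have hkey : ‖μ • ((∑ k, p k • wplus k) - wt) + gradient f wt‖
      ≤ (Γ + L * (1 + Γ) / (μ - Lm)) * (B * ‖gradient f wt‖) := by
    have hrepr : μ • ((∑ k, p k • wplus k) - wt) + gradient f wt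
        = ∑ k, p k • ((gradient (F k) (wplus k) + μ • (wplus k - wt))
            - (gradient (F k) (wplus k) - gradient (F k) wt)) := by
      rw [hdbar, hgradf_eq wt, Finset.smul_sum, ← Finset.sum_add_distrib]
      refine Finset.sum_congr rfl fun k _ => ?_
      module
    rw [hrepr]
    calc ‖∑ k, p k • ((gradient (F k) (wplus k) + μ • (wplus k - wt))
            - (gradient (F k) (wplus k) - gradient (F k) wt))‖
        ≤ ∑ k, ‖p k • ((gradient (F k) (wplus k) + μ • (wplus k - wt))
            - (gradient (F k) (wplus k) - gradient (F k) wt))‖ := norm_sum_le _ _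
      _ ≤ ∑ k, p k * ((Γ + L * (1 + Γ) / (μ - Lm)) * ‖gradient (F k) wt‖) := by
          apply Finset.sum_le_sum; intro k _
          rw [norm_smul, Real.norm_eq_abs, abs_of_nonneg (hp k)]
          apply mul_le_mul_of_nonneg_left _ (hp k)
          calc ‖(gradient (F k) (wplus k) + μ • (wplus k - wt))
                - (gradient (F k) (wplus k) - gradient (F k) wt)‖
              ≤ ‖gradient (F k) (wplus k) + μ • (wplus k - wt)‖
                + ‖gradient (F k) (wplus k) - gradient (F k) wt‖ := norm_sub_le _ _
            _ ≤ γ k * ‖gradient (F k) wt‖ + L * ‖wplus k - wt‖ :=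
                add_le_add (hinexact k) (hglip k _ _)
            _ ≤ (Γ + L * (1 + Γ) / (μ - Lm)) * ‖gradient (F k) wt‖ := by
                have h1 := hγΓ k
                have h3 := norm_nonneg (gradient (F k) wt)
                have h5 : γ k * ‖gradient (F k) wt‖ ≤ Γ * ‖gradient (F k) wt‖ :=
                  mul_le_mul_of_nonneg_right h1 h3
                have h6 := mul_le_mul_of_nonneg_left (hdk k) hL
                have h7 : L * ((1 + Γ) / (μ - Lm) * ‖gradient (F k) wt‖)
                    = L * (1 + Γ) / (μ - Lm) * ‖gradient (F k) wt‖ := by ring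
                rw [h7] at h6
                have h8 : (Γ + L * (1 + Γ) / (μ - Lm)) * ‖gradient (F k) wt‖
                    = Γ * ‖gradient (F k) wt‖
                      + L * (1 + Γ) / (μ - Lm) * ‖gradient (F k) wt‖ := by ring
                rw [h8]
                exact add_le_add h5 h6
      _ = (Γ + L * (1 + Γ) / (μ - Lm)) * ∑ k, p k * ‖gradient (F k) wt‖ := by
          rw [Finset.mul_sum]; exact Finset.sum_congr rfl fun k _ => by ring
      _ ≤ (Γ + L * (1 + Γ) / (μ - Lm)) * (B * ‖gradient f wt‖) :=
          mul_le_mul_of_nonneg_left hS1 hcoef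
  -- Step 3: descent at the average of all devices
  have hstep3 : f (∑ k, p k • wplus k) ≤ f wt
      - (1/μ - Γ*B/μ - L*B*(1+Γ)/((μ-Lm)*μ)) * ‖gradient f wt‖^2
      + L/2 * ((1+Γ)/(μ-Lm) * (B*‖gradient f wt‖))^2 := by
    have hdl := descent_lemma hL hfdiff hflip hfcont wt (∑ k, p k • wplus k)
    have h1 : μ * ⟪gradient f wt, (∑ k, p k • wplus k) - wt⟫
        = ⟪gradient f wt, μ • ((∑ k, p k • wplus k) - wt) + gradient f wt⟫
          - ‖gradient f wt‖^2 := by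
      rw [inner_add_right, real_inner_smul_right, real_inner_self_eq_norm_sq]; ring
    have h2 : ⟪gradient f wt, μ • ((∑ k, p k • wplus k) - wt) + gradient f wt⟫
        ≤ ‖gradient f wt‖ * ((Γ + L * (1 + Γ) / (μ - Lm)) * (B * ‖gradient f wt‖)) := by
      calc ⟪gradient f wt, μ • ((∑ k, p k • wplus k) - wt) + gradient f wt⟫
          ≤ ‖gradient f wt‖ * ‖μ • ((∑ k, p k • wplus k) - wt) + gradient f wt‖ :=
            real_inner_le_norm _ _
        _ ≤ _ := mul_le_mul_of_nonneg_left hkey hGnn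
    have h3 : ⟪gradient f wt, (∑ k, p k • wplus k) - wt⟫
        ≤ (-(1/μ) + Γ*B/μ + L*B*(1+Γ)/((μ-Lm)*μ)) * ‖gradient f wt‖^2 := by
      rw [show (-(1/μ) + Γ*B/μ + L*B*(1+Γ)/((μ-Lm)*μ)) * ‖gradient f wt‖^2
          = (‖gradient f wt‖ * ((Γ + L * (1+Γ)/(μ-Lm)) * (B * ‖gradient f wt‖))
            - ‖gradient f wt‖^2) / μ from by field_simp; ring]
      rw [le_div_iff₀ hμpos]
      nlinarith [h1, h2]
    have h4 : ‖(∑ k, p k • wplus k) - wt‖^2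
        ≤ ((1+Γ)/(μ-Lm) * (B*‖gradient f wt‖))^2 :=
      pow_le_pow_left₀ (norm_nonneg _) hdbarnorm 2
    have h5 := mul_le_mul_of_nonneg_left h4 (by linarith : (0:ℝ) ≤ L/2)
    linarith [hdl, h3, h5]
  -- sampling machinery
  have hPnn : ∀ s : Fin K → Fin N, (0:ℝ) ≤ ∏ j, p (s j) :=
    fun s => Finset.prod_nonneg fun j _ => hp _
  have hPsum : ∑ s : Fin K → Fin N, (∏ j, p (s j)) = 1 := prob_sum_one p hp1
  have hYsum : ∑ k, p k • (wplus k - (∑ k', p k' • wplus k')) = 0 := by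
    simp_rw [smul_sub]
    rw [Finset.sum_sub_distrib, ← Finset.sum_smul, hp1, one_smul, sub_self]
  have havg : ∀ s : Fin K → Fin N,
      (1 / (K:ℝ)) • (∑ j, wplus (s j)) - (∑ k, p k • wplus k)
        = (1 / (K:ℝ)) • ∑ j, (wplus (s j) - (∑ k, p k • wplus k)) := by
    intro s
    have h1 : ∑ j : Fin K, (wplus (s j) - (∑ k, p k • wplus k))
        = (∑ j, wplus (s j)) - (K : ℕ) • (∑ k, p k • wplus k) := by
      rw [Finset.sum_sub_distrib, Finset.sum_const, Finset.card_univ, Fintype.card_fin]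
    rw [h1, smul_sub, ← Nat.cast_smul_eq_nsmul ℝ, smul_smul,
      one_div_mul_cancel (ne_of_gt hKpos), one_smul]
  have hdesc : ∀ s : Fin K → Fin N, f ((1/(K:ℝ)) • ∑ j, wplus (s j))
      ≤ f (∑ k, p k • wplus k)
        + ⟪gradient f (∑ k, p k • wplus k),
            (1/(K:ℝ)) • ∑ j, (wplus (s j) - (∑ k, p k • wplus k))⟫
        + L/2 * ‖(1/(K:ℝ)) • ∑ j, (wplus (s j) - (∑ k, p k • wplus k))‖^2 := by
    intro s
    have h := descent_lemma hL hfdiff hflip hfcont (∑ k, p k • wplus k)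
      ((1/(K:ℝ)) • ∑ j, wplus (s j))
    rwa [havg s] at h
  -- linear term vanishes in expectation
  have hlinterm : ∑ s : Fin K → Fin N, (∏ j, p (s j)) *
      ⟪gradient f (∑ k, p k • wplus k),
        (1/(K:ℝ)) • ∑ j, (wplus (s j) - (∑ k, p k • wplus k))⟫ = 0 := by
    have hj : ∀ j : Fin K, ∑ s : Fin K → Fin N, (∏ j', p (s j')) *
        ⟪gradient f (∑ k, p k • wplus k), wplus (s j) - (∑ k, p k • wplus k)⟫ = 0 := by
      intro j
      have h := expect_coord p hp1 j
        (fun k => ⟪gradient f (∑ k', p k' • wplus k'), wplus k - (∑ k', p k' • wplus k')⟫)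
      simp only [smul_eq_mul] at h
      rw [h]
      have h2 : ∑ k, p k * ⟪gradient f (∑ k', p k' • wplus k'),
            wplus k - (∑ k', p k' • wplus k')⟫
          = ⟪gradient f (∑ k', p k' • wplus k'),
              ∑ k, p k • (wplus k - (∑ k', p k' • wplus k'))⟫ := by
        rw [inner_sum]
        exact Finset.sum_congr rfl fun k _ => (real_inner_smul_right _ _ _).symm
      rw [h2, hYsum, inner_zero_right]
    calc ∑ s : Fin K → Fin N, (∏ j, p (s j)) *
          ⟪gradient f (∑ k, p k • wplus k),
            (1/(K:ℝ)) • ∑ j, (wplus (s j) - (∑ k, p k • wplus k))⟫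
        = ∑ s : Fin K → Fin N, (1/(K:ℝ)) * ∑ j, (∏ j', p (s j')) *
            ⟪gradient f (∑ k, p k • wplus k), wplus (s j) - (∑ k, p k • wplus k)⟫ := by
          refine Finset.sum_congr rfl fun s _ => ?_
          rw [real_inner_smul_right, inner_sum, ← Finset.mul_sum]
          ring
      _ = (1/(K:ℝ)) * ∑ j : Fin K, ∑ s : Fin K → Fin N, (∏ j', p (s j')) *
            ⟪gradient f (∑ k, p k • wplus k), wplus (s j) - (∑ k, p k • wplus k)⟫ := by
          rw [← Finset.mul_sum, Finset.sum_comm]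
      _ = 0 := by
          rw [Finset.sum_congr rfl fun j _ => hj j]
          simp
  -- quadratic term: variance computation
  have hquad : ∑ s : Fin K → Fin N, (∏ j, p (s j)) *
      ‖(1/(K:ℝ)) • ∑ j, (wplus (s j) - (∑ k, p k • wplus k))‖^2
      = (1/(K:ℝ)) * ∑ k, p k * ‖wplus k - (∑ k', p k' • wplus k')‖^2 := by
    have hexp : ∀ s : Fin K → Fin N,
        ‖(1/(K:ℝ)) • ∑ j, (wplus (s j) - (∑ k, p k • wplus k))‖^2
        = (1/(K:ℝ))^2 * ‖∑ j, (wplus (s j) - (∑ k, p k • wplus k))‖^2 := by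
      intro s; rw [norm_smul, mul_pow, Real.norm_eq_abs, sq_abs]
    simp_rw [hexp]
    have h2 : ∑ s : Fin K → Fin N, (∏ j, p (s j)) *
        ((1/(K:ℝ))^2 * ‖∑ j, (wplus (s j) - (∑ k, p k • wplus k))‖^2)
        = (1/(K:ℝ))^2 * ∑ s : Fin K → Fin N, (∏ j, p (s j)) *
            ‖∑ j, (wplus (s j) - (∑ k, p k • wplus k))‖^2 := by
      rw [Finset.mul_sum]; exact Finset.sum_congr rfl fun s _ => by ring
    rw [h2, expect_var p hp1 _ hYsum]
    field_simp
  -- variance bound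
  have hVbound : ∑ k, p k * ‖wplus k - (∑ k', p k' • wplus k')‖^2
      ≤ 4 * (1+Γ)^2 * B^2 / (μ-Lm)^2 * ‖gradient f wt‖^2 := by
    have hYk : ∀ k, ‖wplus k - (∑ k', p k' • wplus k')‖^2
        ≤ 2 * ((1+Γ)/(μ-Lm))^2 * ‖gradient (F k) wt‖^2
          + 2 * ((1+Γ)/(μ-Lm) * (B * ‖gradient f wt‖))^2 := by
      intro k
      have hYrepr : wplus k - (∑ k', p k' • wplus k')
          = (wplus k - wt) - ((∑ k', p k' • wplus k') - wt) := by abel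
      have h1 : ‖wplus k - (∑ k', p k' • wplus k')‖
          ≤ ‖wplus k - wt‖ + ‖(∑ k', p k' • wplus k') - wt‖ := by
        rw [hYrepr]; exact norm_sub_le _ _
      have h2 := hdk k
      have h3 := hdbarnorm
      nlinarith [norm_nonneg (wplus k - (∑ k', p k' • wplus k')),
        norm_nonneg (wplus k - wt), norm_nonneg ((∑ k', p k' • wplus k') - wt),
        sq_nonneg (‖wplus k - wt‖ - ‖(∑ k', p k' • wplus k') - wt‖)]
    calc ∑ k, p k * ‖wplus k - (∑ k', p k' • wplus k')‖^2
        ≤ ∑ k, p k * (2 * ((1+Γ)/(μ-Lm))^2 * ‖gradient (F k) wt‖^2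
            + 2 * ((1+Γ)/(μ-Lm) * (B * ‖gradient f wt‖))^2) :=
          Finset.sum_le_sum fun k _ => mul_le_mul_of_nonneg_left (hYk k) (hp k)
      _ = 2 * ((1+Γ)/(μ-Lm))^2 * (∑ k, p k * ‖gradient (F k) wt‖^2)
          + 2 * ((1+Γ)/(μ-Lm) * (B * ‖gradient f wt‖))^2 := by
          simp_rw [mul_add]
          rw [Finset.sum_add_distrib, ← Finset.sum_mul, hp1, one_mul, Finset.mul_sum]
          congr 1
          exact Finset.sum_congr rfl fun k _ => by ring
      _ ≤ 2 * ((1+Γ)/(μ-Lm))^2 * (B^2 * ‖gradient f wt‖^2)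
          + 2 * ((1+Γ)/(μ-Lm) * (B * ‖gradient f wt‖))^2 := by
          have hc : (0:ℝ) ≤ 2 * ((1+Γ)/(μ-Lm))^2 := by positivity
          nlinarith [mul_le_mul_of_nonneg_left hdissim hc]
      _ = 4 * (1+Γ)^2 * B^2 / (μ-Lm)^2 * ‖gradient f wt‖^2 := by
          field_simp; ring
  -- combine the per-sample descent inequalities
  have hsum_le : ∑ s : Fin K → Fin N, (∏ j, p (s j)) * f ((1/(K:ℝ)) • ∑ j, wplus (s j))
      ≤ f (∑ k, p k • wplus k)
        + L/2 * ((1/(K:ℝ)) * ∑ k, p k * ‖wplus k - (∑ k', p k' • wplus k')‖^2) := by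
    calc ∑ s : Fin K → Fin N, (∏ j, p (s j)) * f ((1/(K:ℝ)) • ∑ j, wplus (s j))
        ≤ ∑ s : Fin K → Fin N, (∏ j, p (s j)) * (f (∑ k, p k • wplus k)
            + ⟪gradient f (∑ k, p k • wplus k),
                (1/(K:ℝ)) • ∑ j, (wplus (s j) - (∑ k, p k • wplus k))⟫
            + L/2 * ‖(1/(K:ℝ)) • ∑ j, (wplus (s j) - (∑ k, p k • wplus k))‖^2) :=
          Finset.sum_le_sum fun s _ => mul_le_mul_of_nonneg_left (hdesc s) (hPnn s)
      _ = (∑ s : Fin K → Fin N, (∏ j, p (s j))) * f (∑ k, p k • wplus k)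
          + (∑ s : Fin K → Fin N, (∏ j, p (s j)) *
              ⟪gradient f (∑ k, p k • wplus k),
                (1/(K:ℝ)) • ∑ j, (wplus (s j) - (∑ k, p k • wplus k))⟫)
          + L/2 * ∑ s : Fin K → Fin N, (∏ j, p (s j)) *
              ‖(1/(K:ℝ)) • ∑ j, (wplus (s j) - (∑ k, p k • wplus k))‖^2 := by
          simp_rw [mul_add]
          rw [Finset.sum_add_distrib, Finset.sum_add_distrib, ← Finset.sum_mul,
            Finset.mul_sum]
          congr 1
          exact Finset.sum_congr rfl fun s _ => by ring
      _ = f (∑ k, p k • wplus k)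
          + L/2 * ((1/(K:ℝ)) * ∑ k, p k * ‖wplus k - (∑ k', p k' • wplus k')‖^2) := by
          rw [hPsum, one_mul, hlinterm, add_zero, hquad]
  -- final numeric assembly
  have hsqK : (0:ℝ) < Real.sqrt K := Real.sqrt_pos.mpr hKpos
  have hρ_ineq : ρ ≤ 1/μ - Γ*B/μ - L*B*(1+Γ)/((μ-Lm)*μ)
      - L*(1+Γ)^2*B^2/(2*(μ-Lm)^2) - 2*L*(1+Γ)^2*B^2/((μ-Lm)^2*(K:ℝ)) := by
    rw [hρ]
    have ht1 : (0:ℝ) ≤ Real.sqrt 2 * B * (1+Γ) / ((μ-Lm) * Real.sqrt (K:ℝ)) := by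
      apply div_nonneg _ (mul_nonneg hmubar.le hsqK.le)
      exact mul_nonneg (mul_nonneg (Real.sqrt_nonneg 2) hB) (by linarith)
    have ht2 : 2*L*(1+Γ)^2*B^2/((μ-Lm)^2*(K:ℝ))
        ≤ L*B^2*(1+Γ)^2*(2*Real.sqrt (2*(K:ℝ))+2)/((μ-Lm)^2*(K:ℝ)) := by
      rw [div_le_div_iff_of_pos_right (by positivity : (0:ℝ) < (μ-Lm)^2*(K:ℝ))]
      nlinarith [Real.sqrt_nonneg (2*(K:ℝ)),
        mul_nonneg (mul_nonneg (mul_nonneg hL (sq_nonneg B)) (sq_nonneg (1+Γ)))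
          (Real.sqrt_nonneg (2*(K:ℝ)))]
    linarith
  have hq1eq : L/2 * ((1+Γ)/(μ-Lm) * (B*‖gradient f wt‖))^2
      = L*(1+Γ)^2*B^2/(2*(μ-Lm)^2) * ‖gradient f wt‖^2 := by
    field_simp
  have hq2 : L/2 * ((1/(K:ℝ)) * ∑ k, p k * ‖wplus k - (∑ k', p k' • wplus k')‖^2)
      ≤ 2*L*(1+Γ)^2*B^2/((μ-Lm)^2*(K:ℝ)) * ‖gradient f wt‖^2 := by
    have h1 : L/2 * ((1/(K:ℝ)) * ∑ k, p k * ‖wplus k - (∑ k', p k' • wplus k')‖^2)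
        ≤ L/2 * ((1/(K:ℝ)) * (4 * (1+Γ)^2 * B^2 / (μ-Lm)^2 * ‖gradient f wt‖^2)) := by
      apply mul_le_mul_of_nonneg_left _ (by linarith : (0:ℝ) ≤ L/2)
      exact mul_le_mul_of_nonneg_left hVbound (by positivity)
    calc L/2 * ((1/(K:ℝ)) * ∑ k, p k * ‖wplus k - (∑ k', p k' • wplus k')‖^2)
        ≤ L/2 * ((1/(K:ℝ)) * (4 * (1+Γ)^2 * B^2 / (μ-Lm)^2 * ‖gradient f wt‖^2)) := h1
      _ = 2*L*(1+Γ)^2*B^2/((μ-Lm)^2*(K:ℝ)) * ‖gradient f wt‖^2 := by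
          field_simp; ring
  have hGsq : (0:ℝ) ≤ ‖gradient f wt‖^2 := sq_nonneg _
  have hfinal := mul_le_mul_of_nonneg_right hρ_ineq hGsq
  calc ∑ s : Fin K → Fin N, (∏ j, p (s j)) * f ((1/(K:ℝ)) • ∑ j, wplus (s j))
      ≤ f (∑ k, p k • wplus k)
        + L/2 * ((1/(K:ℝ)) * ∑ k, p k * ‖wplus k - (∑ k', p k' • wplus k')‖^2) := hsum_le
    _ ≤ f wt - ρ * ‖gradient f wt‖^2 := by linarith [hstep3, hq2, hq1eq.le, hq1eq.ge, hfinal]
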